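/- For all positive integers γ and δ there exists a constant C > 0 such that for every integer N ≥ 2 there exists a (γ,δ)-free set Q ⊆ {1,2,…,N} with |Q| ≥ N / 2^{C·√(log₂ N)}. -/

import Mathlib

open Finset

/-- A set `X` of integers is `(γ,δ)`-free if no three distinct elements `a, b, c ∈ X`
satisfy `γ·a + δ·b = (γ+δ)·c`. -/
def IsFree (γ δ : ℤ) (X : Set ℤ) : Prop :=
  ¬ ∃ a ∈ X, ∃ b ∈ X, ∃ c ∈ X, a ≠ b ∧ a ≠ c ∧ b ≠ c ∧ γ * a + δ * b = (γ + δ) * c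

lemma my_key_vec {n d k g h : ℕ} (hg : 0 < g) (hh : 0 < h)
    {a b c : Fin n → ℕ} (ha : a ∈ Behrend.sphere n d k) (hb : b ∈ Behrend.sphere n d k)
    (hc : c ∈ Behrend.sphere n d k)
    (heq : ∀ i, g * a i + h * b i = (g + h) * c i) : a = b ∧ a = c := by
  have hka : ∑ i, (a i : ℤ) ^ 2 = (k : ℤ) := by
    have := (Finset.mem_filter.1 ha).2; exact_mod_cast congrArg (Nat.cast (R := ℤ)) this
  have hkb : ∑ i, (b i : ℤ) ^ 2 = (k : ℤ) := by
    have := (Finset.mem_filter.1 hb).2; exact_mod_cast congrArg (Nat.cast (R := ℤ)) this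
  have hkc : ∑ i, (c i : ℤ) ^ 2 = (k : ℤ) := by
    have := (Finset.mem_filter.1 hc).2; exact_mod_cast congrArg (Nat.cast (R := ℤ)) this
  have heqz : ∀ i, (g : ℤ) * a i + (h : ℤ) * b i = ((g : ℤ) + h) * c i := by
    intro i; exact_mod_cast heq i
  have hsum : ∑ i, ((g : ℤ) * h * ((a i : ℤ) - (b i : ℤ)) ^ 2) = 0 := by
    have e1 : ∀ i ∈ Finset.univ (α := Fin n), (g : ℤ) * h * ((a i : ℤ) - (b i : ℤ)) ^ 2
        = (((g : ℤ) + h) * ((g : ℤ) * (a i : ℤ) ^ 2 + (h : ℤ) * (b i : ℤ) ^ 2)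
          - ((g : ℤ) + h) ^ 2 * (c i : ℤ) ^ 2) := by
      intro i _
      have h2 := heqz i
      linear_combination (-((↑g + ↑h) * (↑(c i) : ℤ) + ↑g * ↑(a i) + ↑h * ↑(b i))) * h2
    rw [Finset.sum_congr rfl e1, Finset.sum_sub_distrib, ← Finset.mul_sum, ← Finset.mul_sum,
      Finset.sum_add_distrib, ← Finset.mul_sum, ← Finset.mul_sum, hka, hkb, hkc]
    ring
  have hab : a = b := by
    funext i
    have h0 := (Finset.sum_eq_zero_iff_of_nonneg (fun i _ => by positivity)).1 hsum i (Finset.mem_univ i)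
    have : ((a i : ℤ) - b i) ^ 2 = 0 := by
      have hgh : (0:ℤ) < (g:ℤ) * h := by positivity
      nlinarith [sq_nonneg ((a i : ℤ) - b i)]
    have : (a i : ℤ) = b i := by nlinarith [this]
    exact_mod_cast this
  refine ⟨hab, funext fun i => ?_⟩
  have h2 := heqz i
  rw [hab] at h2 ⊢
  have : ((g : ℤ) + h) * b i = ((g : ℤ) + h) * c i := by linarith [h2]
  have hgh : ((g : ℤ) + h) ≠ 0 := by positivity
  have := mul_left_cancel₀ hgh this
  exact_mod_cast this

lemma my_map_lt_pow {n D : ℕ} {x : Fin n → ℕ} (hx : ∀ i, x i < D) :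
    Behrend.map D x < D ^ n := by
  induction n with
  | zero => simp [Behrend.map]
  | succ n ih =>
    have h0 : x 0 < D := hx 0
    have hm : Behrend.map D (x ∘ Fin.succ) < D ^ n := ih (fun i => hx i.succ)
    have h1 : 1 ≤ D ^ n := Nat.one_le_pow _ _ (by omega)
    have h2 : Behrend.map D (x ∘ Fin.succ) * D ≤ (D ^ n - 1) * D :=
      Nat.mul_le_mul_right _ (by omega)
    rw [Behrend.map_succ']
    calc x 0 + Behrend.map D (x ∘ Fin.succ) * D
        < D + Behrend.map D (x ∘ Fin.succ) * D := by omega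
      _ ≤ D + (D ^ n - 1) * D := Nat.add_le_add_left h2 _
      _ = D + (D ^ n * D - D) := by rw [Nat.sub_mul, one_mul]
      _ = D ^ n * D := by
          have : D ≤ D ^ n * D := Nat.le_mul_of_pos_left D (by omega)
          omega
      _ = D ^ (n+1) := (pow_succ D n).symm

lemma my_nat_ineq (e p q u t L : ℕ) (hp : t = e+3+p) (hq : u = e+4+q)
    (h1 : L ≤ t*(u+1) + u) (hpq : p ≤ q + 1) :
    L + u + 2 ≤ (t-e)*(u-1) + (e+5)^2*u := by
  have h2 : t - e = 3 + p := by omega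
  have h3 : u - 1 = e + 3 + q := by omega
  rw [h2, h3]
  subst hp hq
  nlinarith [hpq, Nat.zero_le (e*e*e), Nat.zero_le (e*e*q), Nat.zero_le (e*e), Nat.zero_le (e*q), Nat.zero_le e, Nat.zero_le q, Nat.zero_le (p*e), Nat.zero_le (p*q)]

lemma my_construction (g h n d k : ℕ) (hg : 0 < g) (hh : 0 < h) (hd : 0 < d) :
    ∃ Q : Finset ℤ, (↑Q ⊆ Set.Icc (1:ℤ) ((((g+h)*d)^n : ℕ) : ℤ)) ∧
      IsFree (g:ℤ) (h:ℤ) ↑Q ∧ Q.card = (Behrend.sphere n d k).card := by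
  set D := (g+h)*d with hD
  have hdD : d ≤ D := Nat.le_mul_of_pos_left d (by omega)
  have hdig : ∀ x : Fin n → ℕ, x ∈ Behrend.sphere n d k → ∀ i, x i < d := by
    intro x hx i
    exact Behrend.mem_box.1 (Behrend.sphere_subset_box hx) i
  refine ⟨((Behrend.sphere n d k).image (Behrend.map D)).image (fun m : ℕ => (m:ℤ)+1),
    ?_, ?_, ?_⟩
  · intro q hq
    simp only [coe_image, Set.mem_image, mem_coe, Finset.mem_image] at hq
    obtain ⟨m, ⟨x, hx, rfl⟩, rfl⟩ := hq
    have h1 : Behrend.map D x < D ^ n :=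
      my_map_lt_pow (fun i => lt_of_lt_of_le (hdig x hx i) hdD)
    constructor
    · omega
    · exact_mod_cast Nat.succ_le_of_lt h1
  · rintro ⟨a, ha, b, hb, c, hc, hab, hac, hbc, he⟩
    simp only [coe_image, Set.mem_image, mem_coe, Finset.mem_image] at ha hb hc
    obtain ⟨_, ⟨x, hx, rfl⟩, rfl⟩ := ha
    obtain ⟨_, ⟨y, hy, rfl⟩, rfl⟩ := hb
    obtain ⟨_, ⟨z, hz, rfl⟩, rfl⟩ := hc
    have heN : g * Behrend.map D x + h * Behrend.map D y = (g+h) * Behrend.map D z := by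
      have : (g:ℤ) * Behrend.map D x + (h:ℤ) * Behrend.map D y
          = ((g:ℤ)+h) * Behrend.map D z := by linarith [he]
      exact_mod_cast this
    have hmap : Behrend.map D (g • x + h • y) = Behrend.map D ((g+h) • z) := by
      rw [map_add, map_nsmul, map_nsmul, map_nsmul, smul_eq_mul, smul_eq_mul, smul_eq_mul]
      exact heN
    have huv : g • x + h • y = (g+h) • z := by
      refine Behrend.map_injOn ?_ ?_ hmap
      · intro i
        simp only [Pi.add_apply, Pi.smul_apply, smul_eq_mul]
        calc g * x i + h * y i < g * d + h * d := by
              have h1 : g * x i < g * d := mul_lt_mul_of_pos_left (hdig x hx i) hg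
              have h2 : h * y i < h * d := mul_lt_mul_of_pos_left (hdig y hy i) hh
              omega
          _ = D := by rw [hD]; ring
      · intro i
        simp only [Pi.smul_apply, smul_eq_mul]
        calc (g+h) * z i < (g+h) * d := mul_lt_mul_of_pos_left (hdig z hz i) (by omega)
          _ = D := rfl
    have hxy : x = y := by
      refine (my_key_vec hg hh hx hy hz fun i => ?_).1
      have := congrFun huv i
      simpa [smul_eq_mul] using this
    exact hab (by rw [hxy])
  · rw [Finset.card_image_of_injOn (fun m _ n _ hmn => by exact_mod_cast add_right_cancel hmn),
      Finset.card_image_of_injOn]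
    exact Behrend.map_injOn.mono fun x hx i => lt_of_lt_of_le (hdig x hx i) hdD

theorem stmt_4 (γ δ : ℤ) (hγ : 0 < γ) (hδ : 0 < δ) :
    ∃ C : ℝ, 0 < C ∧ ∀ N : ℕ, 2 ≤ N →
      ∃ Q : Finset ℤ, ↑Q ⊆ Set.Icc (1 : ℤ) (N : ℤ) ∧ IsFree γ δ ↑Q ∧
        (N : ℝ) / 2 ^ (C * Real.sqrt (Real.logb 2 N)) ≤ (Q.card : ℝ) := by
  set g := γ.toNat with hgdef
  set h := δ.toNat with hhdef
  have hγ' : (g : ℤ) = γ := Int.toNat_of_nonneg hγ.le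
  have hδ' : (h : ℤ) = δ := Int.toNat_of_nonneg hδ.le
  have hg : 0 < g := by omega
  have hh : 0 < h := by omega
  set e := Nat.clog 2 (g + h) with hedef
  have hse : g + h ≤ 2 ^ e := Nat.le_pow_clog one_lt_two _
  set C : ℝ := (((e+5)^2 : ℕ) : ℝ) with hCdef
  refine ⟨C, by positivity, fun N hN => ?_⟩
  set L := Nat.log 2 N with hLdef
  have hL1 : 1 ≤ L := Nat.log_pos one_lt_two hN
  have h2L : 2 ^ L ≤ N := Nat.pow_log_le_self 2 (by omega)
  have hN2L : N < 2 ^ (L + 1) := Nat.lt_pow_succ_log_self one_lt_two N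
  set R := Real.sqrt (Real.logb 2 N) with hRdef
  have hlogbL : (L : ℝ) ≤ Real.logb 2 N := by
    have h1 : ((2:ℝ)) ^ (L:ℝ) ≤ (N:ℝ) := by
      rw [Real.rpow_natCast]; exact_mod_cast h2L
    have h2 : Real.logb 2 ((2:ℝ) ^ (L:ℝ)) = (L:ℝ) := Real.logb_rpow two_pos (by norm_num)
    calc (L:ℝ) = Real.logb 2 ((2:ℝ) ^ (L:ℝ)) := h2.symm
      _ ≤ Real.logb 2 N := by
        refine (Real.logb_le_logb one_lt_two ?_ ?_).2 h1
        · positivity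
        · exact_mod_cast Nat.lt_of_lt_of_le Nat.zero_lt_two hN
  have hRL : Real.sqrt L ≤ R := Real.sqrt_le_sqrt hlogbL
  have hR1 : 1 ≤ R := by
    have : (1:ℝ) ≤ Real.sqrt L := by
      rw [show (1:ℝ) = Real.sqrt 1 from Real.sqrt_one.symm]
      exact Real.sqrt_le_sqrt (by exact_mod_cast hL1)
    linarith
  have hCRpos : (0:ℝ) < 2 ^ (C * R) := Real.rpow_pos_of_pos two_pos _
  by_cases hcase : L ≤ (e+4)^2
  · -- small case : Q = {1}
    refine ⟨{1}, ?_, ?_, ?_⟩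
    · intro q hq
      simp only [coe_singleton, Set.mem_singleton_iff] at hq
      subst hq
      exact ⟨le_refl _, by exact_mod_cast hN.trans' one_le_two⟩
    · rintro ⟨a, ha, b, hb, c, hc, hab, -⟩
      simp only [coe_singleton, Set.mem_singleton_iff] at ha hb
      exact hab (ha.trans hb.symm)
    · rw [Finset.card_singleton]
      rw [Nat.cast_one, div_le_one hCRpos]
      have h1 : (N:ℝ) ≤ (2:ℝ) ^ ((L:ℝ) + 1) := by
        have : (N:ℝ) ≤ ((2^(L+1) : ℕ) : ℝ) := by exact_mod_cast hN2L.le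
        calc (N:ℝ) ≤ ((2^(L+1) : ℕ) : ℝ) := this
          _ = (2:ℝ) ^ ((L+1 : ℕ) : ℝ) := by rw [Real.rpow_natCast]; push_cast; ring
          _ = (2:ℝ) ^ ((L:ℝ) + 1) := by push_cast; ring_nf
      refine h1.trans ?_
      rw [Real.rpow_le_rpow_left_iff one_lt_two]
      have hC1 : (L:ℝ) + 1 ≤ C := by
        rw [hCdef]
        have hexp : (e+5)^2 = (e+4)^2 + 2*e + 9 := by ring
        have : L + 1 ≤ (e+5)^2 := by omega
        exact_mod_cast this
      calc (L:ℝ) + 1 ≤ C := hC1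
        _ = C * 1 := (mul_one C).symm
        _ ≤ C * R := by
          refine mul_le_mul_of_nonneg_left hR1 ?_
          positivity
  · -- big case
    push_neg at hcase
    set u := Nat.sqrt L with hudef
    have husq : u * u ≤ L := by have := Nat.sqrt_le' L; rwa [pow_two] at this
    have hLu : L < (u+1)*(u+1) := by
      have := Nat.lt_succ_sqrt' L; rwa [Nat.succ_eq_add_one, pow_two] at this
    have hu4 : e + 4 ≤ u := by
      refine Nat.le_sqrt.2 ?_
      have : (e+4)^2 = (e+4)*(e+4) := by ring
      omega
    set t := L / (u+1) with htdef
    have htu : t ≤ u := by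
      have := (Nat.div_lt_iff_lt_mul (show 0 < u+1 by omega)).2 hLu
      omega
    have hte : e + 3 ≤ t := by
      refine (Nat.le_div_iff_mul_le (show 0 < u+1 by omega)).2 ?_
      have s2 : (e+4)*u ≤ u*u := Nat.mul_le_mul_right u (by omega)
      calc (e+3)*(u+1) = (e+3)*u + (e+3) := by ring
        _ ≤ (e+4)*u := by
            have hx : (e+4)*u = (e+3)*u + u := by ring
            omega
        _ ≤ u*u := s2
        _ ≤ L := husq
    have htn : t * (u+1) ≤ L := Nat.div_mul_le_self L (u+1)
    have h1 : L ≤ t*(u+1) + u := by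
      have hdm : (u+1) * t + L % (u+1) = L := Nat.div_add_mod L (u+1)
      have hmod : L % (u+1) < u + 1 := Nat.mod_lt L (by omega)
      have : (u+1) * t = t * (u+1) := mul_comm _ _
      omega
    set n := u + 1 with hndef
    set d := 2 ^ (t - e) with hddef
    have hd : 0 < d := Nat.pow_pos (by omega)
    have hD2t : (g+h) * d ≤ 2 ^ t := by
      calc (g+h) * d ≤ 2^e * d := Nat.mul_le_mul_right d hse
        _ = 2 ^ (e + (t-e)) := by rw [pow_add]
        _ = 2 ^ t := by congr 1; omega
    have hDn : ((g+h) * d) ^ n ≤ N := by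
      calc ((g+h) * d) ^ n ≤ (2^t)^n := Nat.pow_le_pow_left hD2t n
        _ = 2 ^ (t * n) := by rw [← pow_mul]
        _ ≤ 2 ^ L := Nat.pow_le_pow_right (by norm_num) htn
        _ ≤ N := h2L
    obtain ⟨k, hk⟩ := Behrend.exists_large_sphere n d
    obtain ⟨Q, hQsub, hQfree, hQcard⟩ := my_construction g h n d k hg hh hd
    refine ⟨Q, ?_, ?_, ?_⟩
    · refine hQsub.trans (Set.Icc_subset_Icc_right ?_)
      exact_mod_cast hDn
    · rwa [hγ', hδ'] at hQfree
    · -- the size bound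
      set A := (t - e) * (u - 1) with hAdef
      have NI : L + u + 2 ≤ A + (e+5)^2 * u := by
        have hp : t = e + 3 + (t - (e+3)) := by omega
        have hq : u = e + 4 + (u - (e+4)) := by omega
        have hpq : t - (e+3) ≤ (u - (e+4)) + 1 := by omega
        have := my_nat_ineq e (t - (e+3)) (u - (e+4)) u t L hp hq h1 hpq
        omega
      have hucast : (u:ℝ) ≤ Real.sqrt L := by
        refine (Real.le_sqrt (by positivity) (by positivity)).2 ?_
        rw [sq]
        exact_mod_cast husq
      -- card bound: 2^A / n ≤ Q.card
      have hcard : (2:ℝ)^(A:ℕ) / (n:ℝ) ≤ (Q.card : ℝ) := by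
        rw [hQcard]
        refine le_trans ?_ hk
        have hdR : (0:ℝ) < (d:ℝ) := by exact_mod_cast hd
        have hnR : (0:ℝ) < (n:ℝ) := by positivity
        have hsplit : ((d:ℝ))^n = (d:ℝ)^(u-1) * (d:ℝ)^2 := by
          rw [← pow_add]
          congr 1
          omega
        have hdA : ((d:ℝ))^(u-1) = (2:ℝ)^(A:ℕ) := by
          rw [hddef, hAdef]
          push_cast
          rw [← pow_mul]
        push_cast
        refine le_of_eq ?_
        rw [hsplit, hdA]
        field_simp
      refine le_trans ?_ hcard
      -- N / 2^(C R) ≤ 2^A / n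
      have step1 : (N:ℝ) / 2 ^ (C * R) ≤ (2:ℝ)^((L:ℝ)+1) / (2:ℝ)^(C * Real.sqrt L) := by
        refine div_le_div₀ (by positivity) ?_ (Real.rpow_pos_of_pos two_pos _) ?_
        · calc (N:ℝ) ≤ ((2^(L+1) : ℕ) : ℝ) := by exact_mod_cast hN2L.le
            _ = (2:ℝ) ^ ((L+1 : ℕ) : ℝ) := by rw [Real.rpow_natCast]; push_cast; ring
            _ = (2:ℝ) ^ ((L:ℝ) + 1) := by push_cast; ring_nf
        · rw [Real.rpow_le_rpow_left_iff one_lt_two]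
          exact mul_le_mul_of_nonneg_left hRL (by positivity)
      have step2 : (2:ℝ)^((L:ℝ)+1) / (2:ℝ)^(C * Real.sqrt L)
          = (2:ℝ)^(((L:ℝ)+1) - C * Real.sqrt L) := (Real.rpow_sub two_pos _ _).symm
      have step3 : (((L:ℝ)+1) - C * Real.sqrt L) ≤ ((A:ℝ) - (n:ℝ)) := by
        have hCu : C * (u:ℝ) ≤ C * Real.sqrt L :=
          mul_le_mul_of_nonneg_left hucast (by positivity)
        have hNIr : (L:ℝ) + 1 + n ≤ (A:ℝ) + C * u := by
          rw [hCdef]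
          have hNIc : ((L + u + 2 : ℕ) : ℝ) ≤ ((A + (e+5)^2 * u : ℕ) : ℝ) := by exact_mod_cast NI
          push_cast at hNIc ⊢
          linarith [hNIc, (show (n:ℝ) = u + 1 by exact_mod_cast hndef)]
        linarith [hCu, hNIr]
      have step4 : (2:ℝ)^(((L:ℝ)+1) - C * Real.sqrt L) ≤ (2:ℝ)^((A:ℝ) - (n:ℝ)) :=
        (Real.rpow_le_rpow_left_iff one_lt_two).2 step3
      have step5 : (2:ℝ)^((A:ℝ) - (n:ℝ)) ≤ (2:ℝ)^(A:ℕ) / (n:ℝ) := by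
        rw [Real.rpow_sub two_pos]
        rw [Real.rpow_natCast, Real.rpow_natCast]
        refine div_le_div_of_nonneg_left (by positivity) (by positivity) ?_
        exact_mod_cast (Nat.lt_two_pow_self (n := n)).le
      calc (N:ℝ) / 2 ^ (C * R) ≤ (2:ℝ)^((L:ℝ)+1) / (2:ℝ)^(C * Real.sqrt L) := step1
        _ = (2:ℝ)^(((L:ℝ)+1) - C * Real.sqrt L) := step2
        _ ≤ (2:ℝ)^((A:ℝ) - (n:ℝ)) := step4
        _ ≤ (2:ℝ)^(A:ℕ) / (n:ℝ) := step5
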